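/- arXiv:2310.06545 — 2 statements merged into one kernel-verified Lean document; each statement's English description precedes it below -/
import Mathlib

section
/- Let f be a meromorphic function on a domain D ⊆ ℂ and let z_0 ∈ D be a zero of f of multiplicity n ≥ 1. If (n+1)·λ_Q − μ_Q ≥ 1, then z_0 is a zero of Q[f] of multiplicity at least (n+1)·λ_Q − μ_Q. -/
open Filter Metric Complex Set MeasureTheory
open scoped OnePoint Topology

noncomputable section

/-- The finite value of a point of the Riemann sphere (junk value `0` at `∞`). -/
def OnePoint.valD (u : OnePoint ℂ) : ℂ := Option.getD u 0

open Classical in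
/-- The chordal (spherical) distance on the Riemann sphere `OnePoint ℂ`. -/
def chordalDist (u v : OnePoint ℂ) : ℝ :=
  if u = ∞ then
    (if v = ∞ then 0 else 2 / Real.sqrt (1 + ‖v.valD‖ ^ 2))
  else if v = ∞ then 2 / Real.sqrt (1 + ‖u.valD‖ ^ 2)
  else 2 * ‖u.valD - v.valD‖ /
    (Real.sqrt (1 + ‖u.valD‖ ^ 2) * Real.sqrt (1 + ‖v.valD‖ ^ 2))

open Classical in
/-- The value of a meromorphic function viewed on the Riemann sphere: at a pole the
value is `∞`. -/
def sphValue (f : ℂ → ℂ) (z : ℂ) : OnePoint ℂ :=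
  if h : MeromorphicAt f z then
    (if meromorphicOrderAt f z < 0 then ∞ else (f z : OnePoint ℂ))
  else (f z : OnePoint ℂ)

/-- Locally uniform convergence on `D` with respect to the spherical (chordal) metric of a
sequence of meromorphic functions towards a sphere-valued limit function. -/
def SphLocUnifConvOn (F : ℕ → ℂ → ℂ) (g : ℂ → OnePoint ℂ) (D : Set ℂ) : Prop :=
  TendstoLocallyUniformlyOn (fun j z => chordalDist (sphValue (F j) z) (g z))
    (fun _ => 0) atTop D

/-- The limit function is either identically `∞` on `D`, or is (the sphere-valued version
of) a meromorphic function on `D`. -/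
def MeromOrInftyOn (g : ℂ → OnePoint ℂ) (D : Set ℂ) : Prop :=
  (∀ z ∈ D, g z = ∞) ∨ ∃ G : ℂ → ℂ, MeromorphicOn G D ∧ ∀ z ∈ D, g z = sphValue G z

/-- A family `𝓕` of meromorphic functions is normal on `D`: every sequence from `𝓕` has a
subsequence converging locally uniformly on `D` (spherical metric) to a limit which is
meromorphic on `D` or identically `∞`. -/
def NormalFamilyOn (𝓕 : Set (ℂ → ℂ)) (D : Set ℂ) : Prop :=
  ∀ F : ℕ → ℂ → ℂ, (∀ j, F j ∈ 𝓕) →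
    ∃ t : ℕ → ℕ, StrictMono t ∧ ∃ g : ℂ → OnePoint ℂ,
      MeromOrInftyOn g D ∧ SphLocUnifConvOn (fun j => F (t j)) g D

/-- A sequence of meromorphic functions is normal on `D`. -/
def NormalSeqOn (F : ℕ → ℂ → ℂ) (D : Set ℂ) : Prop :=
  NormalFamilyOn (Set.range F) D

/-- Every pole of `f` in `D` has multiplicity at least `m`. -/
def PolesMultGeOn (f : ℂ → ℂ) (D : Set ℂ) (m : ℕ) : Prop :=
  ∀ z ∈ D, ∀ h : MeromorphicAt f z, meromorphicOrderAt f z < 0 → meromorphicOrderAt f z ≤ ((-(m : ℤ) : ℤ) : WithTop ℤ)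

/-- Every zero of `f` in `D` has multiplicity at least `m`. -/
def ZerosMultGeOn (f : ℂ → ℂ) (D : Set ℂ) (m : ℕ) : Prop :=
  ∀ z ∈ D, ∀ h : MeromorphicAt f z, 0 < meromorphicOrderAt f z → (((m : ℤ) : WithTop ℤ)) ≤ meromorphicOrderAt f z

/-- The meromorphic function `f` omits the value `0` on `D`. -/
def NowhereZeroOn (f : ℂ → ℂ) (D : Set ℂ) : Prop :=
  ∀ z ∈ D, (∀ h : MeromorphicAt f z, ¬ 0 < meromorphicOrderAt f z) ∧ (AnalyticAt ℂ f z → f z ≠ 0)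

/-- The open unit disk in `ℂ`. -/
def unitDisk : Set ℂ := Metric.ball (0 : ℂ) 1

/-- The differential polynomial `Q[f] = f^{x₀} * (f^{x₁})^{(y₁)} * ⋯ * (f^{x_k})^{(y_k)}`.
Its degree is `λ_Q = x₀ + ∑ i, x i` and its weight is `μ_Q = λ_Q + ∑ i, y i`. -/
def Qpoly (x₀ k : ℕ) (x y : Fin k → ℕ) (f : ℂ → ℂ) : ℂ → ℂ :=
  fun z => f z ^ x₀ * ∏ i : Fin k, iteratedDeriv (y i) (fun w => f w ^ x i) z

/-- If two functions agree on a punctured neighborhood, so do their derivatives. -/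
lemma derivEvP {f g : ℂ → ℂ} {z₀ : ℂ} (h : f =ᶠ[𝓝[≠] z₀] g) :
    deriv f =ᶠ[𝓝[≠] z₀] deriv g := by
  obtain ⟨u, huo, hz₀u, hu⟩ := mem_nhdsWithin.mp h
  apply Filter.eventuallyEq_iff_exists_mem.mpr
  refine ⟨u ∩ {z₀}ᶜ, mem_nhdsWithin.mpr ⟨u, huo, hz₀u, fun w hw => hw⟩, fun z hz => ?_⟩
  have hmem : u ∩ {z₀}ᶜ ∈ 𝓝 z := (huo.inter isOpen_compl_singleton).mem_nhds hz
  exact Filter.EventuallyEq.deriv_eq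
    (Filter.eventuallyEq_of_mem hmem (fun w hw => hu hw))

lemma iteratedDerivEvP {f g : ℂ → ℂ} {z₀ : ℂ} (h : f =ᶠ[𝓝[≠] z₀] g) (m : ℕ) :
    iteratedDeriv m f =ᶠ[𝓝[≠] z₀] iteratedDeriv m g := by
  induction m with
  | zero => simpa using h
  | succ m ih => rw [iteratedDeriv_succ, iteratedDeriv_succ]; exact derivEvP ih

/-- Iterated derivative of `(z - z₀)^m * G z` with `G` analytic: factor out
`(z - z₀)^(m - y)`. -/
lemma iterDeriv_pow_mul {z₀ : ℂ} :
    ∀ (yy m : ℕ), yy ≤ m → ∀ (G : ℂ → ℂ), AnalyticAt ℂ G z₀ →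
    ∃ H : ℂ → ℂ, AnalyticAt ℂ H z₀ ∧
      iteratedDeriv yy (fun z => (z - z₀) ^ m * G z) =ᶠ[𝓝 z₀]
        fun z => (z - z₀) ^ (m - yy) * H z := by
  intro yy
  induction yy with
  | zero => intro m _ G hG; exact ⟨G, hG, by simp [iteratedDeriv_zero]⟩
  | succ yy ih =>
    intro m hym G hG
    obtain ⟨H, hH, hEv⟩ := ih m (Nat.le_of_succ_le hym) G hG
    obtain ⟨s, hs, hOn⟩ := hH.exists_mem_nhds_analyticOnNhd
    have hH' : AnalyticAt ℂ (deriv H) z₀ := hOn.deriv z₀ (mem_of_mem_nhds hs)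
    refine ⟨fun z => ((m - yy : ℕ) : ℂ) * H z + (z - z₀) * deriv H z,
      (analyticAt_const.mul hH).add ((analyticAt_id.sub analyticAt_const).mul hH'), ?_⟩
    rw [iteratedDeriv_succ]
    refine hEv.deriv.trans ?_
    filter_upwards [hH.eventually_analyticAt] with z hz
    have hd : HasDerivAt (fun w => (w - z₀) ^ (m - yy) * H w)
        ((((m - yy : ℕ) : ℂ) * (z - z₀) ^ (m - yy - 1) * 1) * H z
          + (z - z₀) ^ (m - yy) * deriv H z) z := by
      exact (((hasDerivAt_id z).sub_const z₀).pow _).mul hz.differentiableAt.hasDerivAt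
    rw [hd.deriv]
    have e1 : m - yy - 1 = m - (yy + 1) := by omega
    have e2 : m - yy = (m - (yy + 1)) + 1 := by omega
    rw [e1, e2]
    push_cast
    ring

/-- a zero of `f` of multiplicity `n` is a zero of `Q[f]` of multiplicity
at least `(n+1)λ_Q − μ_Q`. -/
theorem zero_multiplicity_of_differential_polynomial
    (x₀ k : ℕ) (x y : Fin k → ℕ)
    (hk : 1 ≤ k) (hx₀ : 0 < x₀) (hxy : ∀ i, y i ≤ x i) (hy' : 0 < ∑ i, y i)
    (D : Set ℂ) (hD : IsOpen D)
    (f : ℂ → ℂ) (hf : MeromorphicOn f D)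
    (z₀ : ℂ) (hz₀ : z₀ ∈ D)
    (n : ℕ) (hn : 1 ≤ n) (hval : f z₀ = 0)
    (horder : meromorphicOrderAt f z₀ = ((n : ℤ) : WithTop ℤ))
    (hcond : 1 ≤ ((n : ℤ) + 1) * ((x₀ + ∑ i, x i : ℕ) : ℤ)
                - ((x₀ + ∑ i, x i + ∑ i, y i : ℕ) : ℤ)) :
    ∃ hQ : MeromorphicAt (Qpoly x₀ k x y f) z₀,
      ((((n : ℤ) + 1) * ((x₀ + ∑ i, x i : ℕ) : ℤ)
          - ((x₀ + ∑ i, x i + ∑ i, y i : ℕ) : ℤ) : ℤ) : WithTop ℤ) ≤ meromorphicOrderAt (Qpoly x₀ k x y f) z₀ := by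
  classical
  obtain ⟨g, hg, hgne, hfg⟩ := (meromorphicOrderAt_eq_int_iff (hf z₀ hz₀)).mp horder
  have hfg' : ∀ᶠ z in 𝓝[≠] z₀, f z = (z - z₀) ^ n * g z := by
    filter_upwards [hfg] with z hz
    simpa [zpow_natCast, smul_eq_mul] using hz
  have hle : ∀ i : Fin k, y i ≤ n * x i := by
    intro i
    calc y i ≤ x i := hxy i
    _ = 1 * x i := (one_mul _).symm
    _ ≤ n * x i := Nat.mul_le_mul_right _ hn
  have key : ∀ i : Fin k, ∃ H : ℂ → ℂ, AnalyticAt ℂ H z₀ ∧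
      iteratedDeriv (y i) (fun w => f w ^ x i) =ᶠ[𝓝[≠] z₀]
        fun z => (z - z₀) ^ (n * x i - y i) * H z := by
    intro i
    obtain ⟨H, hH, hEv⟩ :=
      iterDeriv_pow_mul (y i) (n * x i) (hle i) (fun w => g w ^ x i) (hg.pow _)
    refine ⟨H, hH, ?_⟩
    have h1 : (fun w => f w ^ x i)
        =ᶠ[𝓝[≠] z₀] (fun w => (w - z₀) ^ (n * x i) * g w ^ x i) := by
      filter_upwards [hfg'] with z hz
      rw [hz, mul_pow, ← pow_mul]
    exact (iteratedDerivEvP h1 (y i)).trans (hEv.filter_mono nhdsWithin_le_nhds)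
  choose H hH hEv using key
  set M : ℕ := n * x₀ + ∑ i, (n * x i - y i) with hM
  set W : ℂ → ℂ := fun z => g z ^ x₀ * ∏ i, H i z with hWdef
  have hWa : AnalyticAt ℂ W z₀ :=
    (hg.pow _).mul (Finset.analyticAt_fun_prod _ (fun i _ => hH i))
  have hQev : Qpoly x₀ k x y f =ᶠ[𝓝[≠] z₀] fun z => (z - z₀) ^ M * W z := by
    have hall : ∀ᶠ z in 𝓝[≠] z₀, ∀ i, iteratedDeriv (y i) (fun w => f w ^ x i) z
        = (z - z₀) ^ (n * x i - y i) * H i z := eventually_all.mpr hEv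
    filter_upwards [hfg', hall] with z hz hz2
    simp only [Qpoly]
    rw [hz, mul_pow, ← pow_mul,
      Finset.prod_congr rfl (fun i _ => hz2 i), Finset.prod_mul_distrib,
      Finset.prod_pow_eq_pow_sum, hM, hWdef, pow_add]
    ring
  have hQm : MeromorphicAt (Qpoly x₀ k x y f) z₀ := by
    apply MeromorphicAt.iff_eventuallyEq_zpow_smul_analyticAt.mpr
    refine ⟨(M : ℤ), W, hWa, ?_⟩
    filter_upwards [hQev] with z hz
    rw [hz]
    simp [zpow_natCast, smul_eq_mul]
  refine ⟨hQm, ?_⟩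
  -- cast arithmetic
  have hMcast : (M : ℤ) = ((n : ℤ) + 1) * ((x₀ + ∑ i, x i : ℕ) : ℤ)
      - ((x₀ + ∑ i, x i + ∑ i, y i : ℕ) : ℤ) := by
    have hterm : ∀ i : Fin k, ((n * x i - y i : ℕ) : ℤ) = (n : ℤ) * x i - y i := by
      intro i
      rw [Nat.cast_sub (hle i)]
      push_cast
      ring
    rw [hM]
    push_cast [hterm, Finset.sum_sub_distrib]
    rw [← Finset.mul_sum]
    ring
  rcases eq_or_ne (analyticOrderAt W z₀) ⊤ with htop | hne
  · have hWz : ∀ᶠ z in 𝓝 z₀, W z = 0 := analyticOrderAt_eq_top.mp htop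
    have hQtop : meromorphicOrderAt (Qpoly x₀ k x y f) z₀ = ⊤ := by
      rw [meromorphicOrderAt_eq_top_iff]
      filter_upwards [hQev, hWz.filter_mono nhdsWithin_le_nhds] with z h1 h2
      rw [h1, h2, mul_zero]
    rw [hQtop]
    exact le_top
  · obtain ⟨d, hd⟩ := WithTop.ne_top_iff_exists.mp hne
    obtain ⟨w, hw, hwne, hwev⟩ := hWa.analyticOrderAt_eq_natCast.mp hd.symm
    have hord : meromorphicOrderAt (Qpoly x₀ k x y f) z₀ = (((M + d : ℕ) : ℤ) : WithTop ℤ) := by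
      rw [meromorphicOrderAt_eq_int_iff hQm]
      refine ⟨w, hw, hwne, ?_⟩
      filter_upwards [hQev, hwev.filter_mono nhdsWithin_le_nhds] with z h1 h2
      rw [h1, h2]
      simp only [smul_eq_mul, zpow_natCast, pow_add]
      ring
    rw [hord]
    apply WithTop.coe_le_coe.mpr
    rw [← hMcast]
    push_cast
    omega
end
end

section
/- Let m, n be positive integers, let α_1, …, α_n be distinct complex numbers, let n_1, …, n_n be positive integers, let C ∈ ℂ ∖ {0}, and define the rational function f(z) := C / ∏_{i=1}^{n} (z + α_i)^{n_i + m − 1}. Then there exists a polynomial h_Q of degree at most (n−1)·(μ_Q − λ_Q) such that Q[f](z) = h_Q(z) / ∏_{i=1}^{n} (z + α_i)^{λ_Q(n_i + m − 1) + μ_Q − λ_Q} for all z outside {−α_1, …, −α_n}. -/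
open Filter Metric Complex Set MeasureTheory
open scoped OnePoint Topology

noncomputable section

open Polynomial in
lemma derivative_finset_prod {ι : Type*} [DecidableEq ι] (s : Finset ι) (f : ι → ℂ[X]) :
    derivative (∏ i ∈ s, f i) = ∑ i ∈ s, (∏ j ∈ s.erase i, f j) * derivative (f i) := by
  rw [Finset.prod_eq_multiset_prod, derivative_prod, Finset.sum_eq_multiset_sum]
  congr 1

open Polynomial in
lemma prod_deriv_identity {n : ℕ} (α : Fin n → ℂ) (d : Fin n → ℕ) :
    derivative (∏ i, (X + C (α i)) ^ d i) * ∏ i, (X + C (α i)) =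
    (∏ i, (X + C (α i)) ^ d i) *
      ∑ i, C (d i : ℂ) * ∏ j ∈ Finset.univ.erase i, (X + C (α j)) := by
  rw [derivative_finset_prod, Finset.sum_mul, Finset.mul_sum]
  refine Finset.sum_congr rfl fun i _ => ?_
  rw [derivative_pow, derivative_add, derivative_X, derivative_C, add_zero, mul_one]
  rcases Nat.eq_zero_or_pos (d i) with h | h
  · simp [h]
  rw [← Finset.mul_prod_erase _ _ (Finset.mem_univ i),
      ← Finset.mul_prod_erase _ (fun j => (X + C (α j)) ^ d j) (Finset.mem_univ i)]
  have key : (X + C (α i)) ^ (d i - 1) * (X + C (α i)) = (X + C (α i)) ^ d i := by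
    rw [← pow_succ, Nat.sub_add_cancel h]
  calc (∏ j ∈ Finset.univ.erase i, (X + C (α j)) ^ d j) * (C (↑(d i)) * (X + C (α i)) ^ (d i - 1))
        * ((X + C (α i)) * ∏ j ∈ Finset.univ.erase i, (X + C (α j)))
      = ((X + C (α i)) ^ (d i - 1) * (X + C (α i))) * ((∏ j ∈ Finset.univ.erase i, (X + C (α j)) ^ d j)
        * (C (↑(d i)) * ∏ j ∈ Finset.univ.erase i, (X + C (α j)))) := by ring
    _ = _ := by rw [key]; ring

open Polynomial in
lemma step_lemma {n : ℕ} (α : Fin n → ℂ) (d : Fin n → ℕ) (B : ℂ[X]) :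
    ∃ B₂ : ℂ[X], B₂.natDegree ≤ B.natDegree + (n - 1) ∧
      ∀ z : ℂ, (∀ i, z ≠ -α i) →
        HasDerivAt (fun w => B.eval w / ∏ i, (w + α i) ^ d i)
          (B₂.eval z / ∏ i, (z + α i) ^ (d i + 1)) z := by
  set L : ℂ[X] := ∏ i, (X + C (α i)) with hL
  set S : ℂ[X] := ∑ i, C ((d i : ℂ)) * ∏ j ∈ Finset.univ.erase i, (X + C (α j)) with hS
  refine ⟨derivative B * L - B * S, ?_, ?_⟩
  · refine le_trans (natDegree_sub_le _ _) (max_le ?_ ?_)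
    · rcases eq_or_ne (derivative B) 0 with h | h
      · simp [h]
      have hB1 : 1 ≤ B.natDegree := by
        by_contra hc
        push_neg at hc
        interval_cases hB : B.natDegree
        · exact h (derivative_of_natDegree_zero hB)
      have h1 : (derivative B).natDegree ≤ B.natDegree - 1 := natDegree_derivative_le B
      have h2 : L.natDegree ≤ n := by
        refine le_trans (natDegree_prod_le _ _) ?_
        simp [natDegree_X_add_C]
      calc (derivative B * L).natDegree ≤ (derivative B).natDegree + L.natDegree :=
            natDegree_mul_le
        _ ≤ (B.natDegree - 1) + n := add_le_add h1 h2
        _ ≤ B.natDegree + (n - 1) := by omega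
    · have h2 : S.natDegree ≤ n - 1 := by
        refine natDegree_sum_le_of_forall_le _ _ fun i _ => ?_
        refine le_trans natDegree_mul_le ?_
        simp only [natDegree_C, zero_add]
        refine le_trans (natDegree_prod_le _ _) ?_
        simp [natDegree_X_add_C, Finset.card_erase_of_mem]
      calc (B * S).natDegree ≤ B.natDegree + S.natDegree := natDegree_mul_le
        _ ≤ B.natDegree + (n - 1) := by omega
  · intro z hz
    set Dp : ℂ[X] := ∏ i, (X + C (α i)) ^ d i with hDp
    have hne : ∀ i, z + α i ≠ 0 := fun i h => hz i (by linear_combination h)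
    have hDz : Dp.eval z ≠ 0 := by
      rw [hDp, eval_prod]
      refine Finset.prod_ne_zero_iff.2 fun i _ => ?_
      simp only [eval_pow, eval_add, eval_X, eval_C]
      exact pow_ne_zero _ (hne i)
    have hLz : L.eval z ≠ 0 := by
      rw [hL, eval_prod]
      refine Finset.prod_ne_zero_iff.2 fun i _ => ?_
      simpa using hne i
    have hfun : (fun w => B.eval w / ∏ i, (w + α i) ^ d i)
        = fun w => B.eval w / Dp.eval w := by
      funext w; simp [hDp, eval_prod]
    have h1 : HasDerivAt (fun w => B.eval w) ((derivative B).eval z) z := B.hasDerivAt z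
    have h2 : HasDerivAt (fun w => Dp.eval w) ((derivative Dp).eval z) z := Dp.hasDerivAt z
    have hd := h1.div h2 hDz
    rw [hfun]
    refine hd.congr_deriv ?_
    symm
    have hid := congrArg (fun p => eval z p) (prod_deriv_identity α d)
    simp only [eval_mul] at hid
    rw [← hDp, ← hL, ← hS] at hid
    have hprod : (∏ i, (z + α i) ^ (d i + 1)) = Dp.eval z * L.eval z := by
      rw [hDp, hL, eval_prod, eval_prod, ← Finset.prod_mul_distrib]
      refine Finset.prod_congr rfl fun i _ => ?_
      simp [pow_succ]
    rw [hprod, eval_sub, eval_mul, eval_mul]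
    field_simp
    linear_combination (B.eval z) * hid

open Polynomial in
lemma iter_lemma {n : ℕ} (α : Fin n → ℂ) (g : ℂ → ℂ) (y : ℕ) :
    ∀ (d : Fin n → ℕ) (B : ℂ[X]),
      (∀ z : ℂ, (∀ i, z ≠ -α i) → g z = B.eval z / ∏ i, (z + α i) ^ d i) →
      ∃ By : ℂ[X], By.natDegree ≤ B.natDegree + (n - 1) * y ∧
        ∀ z : ℂ, (∀ i, z ≠ -α i) →
          iteratedDeriv y g z = By.eval z / ∏ i, (z + α i) ^ (d i + y) := by
  induction y with
  | zero =>
    intro d B hB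
    exact ⟨B, by simp, fun z hz => by simpa using hB z hz⟩
  | succ y ih =>
    intro d B hB
    obtain ⟨By, hdeg, hval⟩ := ih d B hB
    obtain ⟨B₂, hdeg₂, hder⟩ := step_lemma α (fun i => d i + y) By
    refine ⟨B₂, ?_, ?_⟩
    · calc B₂.natDegree ≤ By.natDegree + (n - 1) := hdeg₂
        _ ≤ B.natDegree + (n - 1) * y + (n - 1) := by omega
        _ = B.natDegree + (n - 1) * (y + 1) := by ring
    · intro z hz
      have hU : IsOpen {w : ℂ | ∀ i, w ≠ -α i} := by
        have : {w : ℂ | ∀ i, w ≠ -α i} = ⋂ i, {-α i}ᶜ := by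
          ext w; simp [Set.mem_iInter]
        rw [this]
        exact isOpen_iInter_of_finite fun i => isOpen_compl_singleton
      have hmem : {w : ℂ | ∀ i, w ≠ -α i} ∈ nhds z := hU.mem_nhds hz
      have heq : iteratedDeriv y g =ᶠ[nhds z]
          (fun w => By.eval w / ∏ i, (w + α i) ^ (d i + y)) :=
        Filter.eventuallyEq_of_mem hmem fun w hw => hval w hw
      rw [iteratedDeriv_succ, heq.deriv_eq, (hder z hz).deriv]
      simp only [← Nat.add_assoc]

/-- the form of `Q[f]` for the rational function
`f(z) = C / ∏ (z + αᵢ)^{nᵢ + m − 1}`. -/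
theorem differential_polynomial_of_rational_function
    (x₀ k : ℕ) (x y : Fin k → ℕ)
    (hk : 1 ≤ k) (hx₀ : 0 < x₀) (hxy : ∀ i, y i ≤ x i) (hy' : 0 < ∑ i, y i)
    (m n : ℕ) (hm : 0 < m) (hn : 0 < n)
    (α : Fin n → ℂ) (hα : Function.Injective α)
    (nn : Fin n → ℕ) (hnn : ∀ i, 0 < nn i)
    (C : ℂ) (hC : C ≠ 0)
    (f : ℂ → ℂ) (hf : f = fun z => C / ∏ i, (z + α i) ^ (nn i + m - 1)) :
    ∃ hQ : Polynomial ℂ,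
      hQ.natDegree ≤ (n - 1) * ((x₀ + ∑ i, x i + ∑ i, y i) - (x₀ + ∑ i, x i)) ∧
      ∀ z : ℂ, (∀ i, z ≠ -α i) →
        Qpoly x₀ k x y f z
          = hQ.eval z / ∏ i, (z + α i) ^
              ((x₀ + ∑ i, x i) * (nn i + m - 1)
                + ((x₀ + ∑ i, x i + ∑ i, y i) - (x₀ + ∑ i, x i))) := by
  set e : Fin n → ℕ := fun j => nn j + m - 1 with he
  have hfx : ∀ (a : ℕ) (z : ℂ),
      f z ^ a = (Polynomial.C (C ^ a)).eval z / ∏ j, (z + α j) ^ (a * e j) := by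
    intro a z
    rw [hf]
    simp only [Polynomial.eval_C, div_pow, ← Finset.prod_pow, ← pow_mul]
    congr 1
    exact Finset.prod_congr rfl fun j _ => by rw [mul_comm]
  have hG : ∀ i : Fin k, ∃ Gi : Polynomial ℂ, Gi.natDegree ≤ (n - 1) * y i ∧
      ∀ z : ℂ, (∀ j, z ≠ -α j) →
        iteratedDeriv (y i) (fun w => f w ^ x i) z
          = Gi.eval z / ∏ j, (z + α j) ^ (x i * e j + y i) := by
    intro i
    obtain ⟨By, h1, h2⟩ := iter_lemma α (fun w => f w ^ x i) (y i)
      (fun j => x i * e j) (Polynomial.C (C ^ x i)) (fun z _ => hfx (x i) z)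
    exact ⟨By, by simpa using h1, h2⟩
  choose G hGdeg hGval using hG
  refine ⟨Polynomial.C (C ^ x₀) * ∏ i, G i, ?_, ?_⟩
  · have hsub : (x₀ + ∑ i, x i + ∑ i, y i) - (x₀ + ∑ i, x i) = ∑ i, y i := by omega
    rw [hsub]
    calc (Polynomial.C (C ^ x₀) * ∏ i, G i).natDegree
        ≤ (Polynomial.C (C ^ x₀)).natDegree + (∏ i, G i).natDegree :=
          Polynomial.natDegree_mul_le
      _ ≤ 0 + ∑ i, (G i).natDegree := by
          gcongr
          · simp
          · exact Polynomial.natDegree_prod_le _ _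
      _ ≤ ∑ i, (n - 1) * y i := by
          rw [zero_add]; exact Finset.sum_le_sum fun i _ => hGdeg i
      _ = (n - 1) * ∑ i, y i := by rw [Finset.mul_sum]
  · intro z hz
    have hexp : ∀ j : Fin n,
        x₀ * e j + ∑ i, (x i * e j + y i)
          = (x₀ + ∑ i, x i) * (nn j + m - 1)
            + ((x₀ + ∑ i, x i + ∑ i, y i) - (x₀ + ∑ i, x i)) := by
      intro j
      have hsub : (x₀ + ∑ i, x i + ∑ i, y i) - (x₀ + ∑ i, x i) = ∑ i, y i := by omega
      rw [hsub, Finset.sum_add_distrib, ← Finset.sum_mul]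
      show x₀ * e j + ((∑ i, x i) * e j + ∑ i, y i) = (x₀ + ∑ i, x i) * e j + ∑ i, y i
      ring
    have key : Qpoly x₀ k x y f z
        = ((Polynomial.C (C ^ x₀) * ∏ i, G i).eval z)
          / ((∏ j, (z + α j) ^ (x₀ * e j)) * ∏ i : Fin k, ∏ j, (z + α j) ^ (x i * e j + y i)) := by
      unfold Qpoly
      rw [hfx x₀ z, Finset.prod_congr rfl fun i _ => hGval i z hz,
        Finset.prod_div_distrib, div_mul_div_comm]
      simp [Polynomial.eval_prod]
    rw [key]
    congr 1
    rw [Finset.prod_comm]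
    rw [← Finset.prod_mul_distrib]
    refine Finset.prod_congr rfl fun j _ => ?_
    rw [Finset.prod_pow_eq_pow_sum, ← pow_add, hexp j]
end
end
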